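/- For the M/D/∞ queue with deterministic service time α (i.e., G(t) = 0 for t < α and G(t) = 1 for t ≥ α), the peakedness p = B̄(1/α) equals (ρ+1)/(e^{ρ+1} + ρ), where ρ = λα. -/

import Mathlib

open Real MeasureTheory Set

lemma inner_integral (α t : ℝ) (hα : 0 < α) (ht : 0 ≤ t) :
    (∫ v in (0:ℝ)..t, (1 - if v < α then (0:ℝ) else 1)) = min t α := by
  have hfun : (fun v => (1 - if v < α then (0:ℝ) else 1)) =
      (Iio α).indicator (fun _ => (1:ℝ)) := by
    ext v
    by_cases h : v < α <;> simp [indicator, h]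
  have hmin : 0 ≤ min t α := le_min ht hα.le
  have hvol : volume (Ioc 0 t ∩ Iio α) = ENNReal.ofReal (min t α) := by
    apply le_antisymm
    · have h2 : Ioc 0 t ∩ Iio α ⊆ Ioc 0 (min t α) := by
        rintro x ⟨⟨hx0, hxt⟩, hxα⟩
        exact ⟨hx0, le_min hxt hxα.le⟩
      calc volume (Ioc 0 t ∩ Iio α) ≤ volume (Ioc 0 (min t α)) := measure_mono h2
        _ = ENNReal.ofReal (min t α) := by rw [Real.volume_Ioc, sub_zero]
    · have h1 : Ioo 0 (min t α) ⊆ Ioc 0 t ∩ Iio α := by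
        rintro x ⟨hx0, hxm⟩
        exact ⟨⟨hx0, (lt_min_iff.mp hxm).1.le⟩, (lt_min_iff.mp hxm).2⟩
      calc ENNReal.ofReal (min t α) = volume (Ioo 0 (min t α)) := by
            rw [Real.volume_Ioo, sub_zero]
        _ ≤ volume (Ioc 0 t ∩ Iio α) := measure_mono h1
  rw [hfun, intervalIntegral.integral_of_le ht,
    MeasureTheory.setIntegral_indicator measurableSet_Iio,
    MeasureTheory.setIntegral_const, measureReal_def, hvol, ENNReal.toReal_ofReal hmin, smul_eq_mul, mul_one]

/-- For the M/D/∞ queue with deterministic service time `α`, the peakedness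
`p = B̄(1/α)` equals `(ρ+1)/(e^{ρ+1} + ρ)`, where `ρ = λα`. -/
theorem stmt_1 (lam α ρ : ℝ) (hlam : 0 < lam) (hα : 0 < α) (hρ : ρ = lam * α) :
    1 + 1 / ρ -
      1 / (lam * ∫ t in Ioi (0:ℝ), Real.exp (-(t / α) -
        lam * ∫ v in (0:ℝ)..t, (1 - if v < α then (0:ℝ) else 1))) =
    (ρ + 1) / (Real.exp (ρ + 1) + ρ) := by
  have hρ0 : 0 < ρ := hρ ▸ mul_pos hlam hα
  set c : ℝ := α⁻¹ + lam with hc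
  have hc0 : 0 < c := by positivity
  set E : ℝ := Real.exp (-(ρ + 1)) with hE
  clear_value c E
  -- Step 1: rewrite integrand using inner integral
  have hcongr : (∫ t in Ioi (0:ℝ), Real.exp (-(t / α) -
        lam * ∫ v in (0:ℝ)..t, (1 - if v < α then (0:ℝ) else 1))) =
      ∫ t in Ioi (0:ℝ), Real.exp (-(t / α) - lam * min t α) := by
    apply MeasureTheory.setIntegral_congr_fun measurableSet_Ioi
    intro t ht
    dsimp only
    rw [inner_integral α t hα (le_of_lt ht)]
  rw [hcongr]
  -- Step 2: split the integral
  have hsplit : Ioi (0:ℝ) = Ioc 0 α ∪ Ioi α := (Ioc_union_Ioi_eq_Ioi hα.le).symm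
  have hcont : Continuous (fun t : ℝ => Real.exp (-(t / α) - lam * min t α)) := by
    apply Real.continuous_exp.comp
    exact ((continuous_id.div_const α).neg).sub
      (continuous_const.mul (continuous_id.min continuous_const))
  have hint1 : IntegrableOn (fun t : ℝ => Real.exp (-(t / α) - lam * min t α))
      (Ioc 0 α) := hcont.integrableOn_Ioc
  have hint2 : IntegrableOn (fun t : ℝ => Real.exp (-(t / α) - lam * min t α))
      (Ioi α) := by
    have : IntegrableOn (fun t : ℝ => Real.exp (-(lam * α)) * Real.exp (-α⁻¹ * t))
        (Ioi α) := (exp_neg_integrableOn_Ioi α (inv_pos.mpr hα)).const_mul _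
    apply this.congr_fun ?_ measurableSet_Ioi
    intro t (ht : α < t)
    dsimp only
    rw [min_eq_right ht.le, ← Real.exp_add]
    ring_nf
  have hJsplit : (∫ t in Ioi (0:ℝ), Real.exp (-(t / α) - lam * min t α)) =
      (∫ t in Ioc 0 α, Real.exp (-(t / α) - lam * min t α)) +
      ∫ t in Ioi α, Real.exp (-(t / α) - lam * min t α) := by
    rw [hsplit]
    exact MeasureTheory.setIntegral_union (Ioc_disjoint_Ioi le_rfl)
      measurableSet_Ioi hint1 hint2
  -- Step 3: compute piece 1
  have hJ1 : (∫ t in Ioc 0 α, Real.exp (-(t / α) - lam * min t α)) =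
      (1 - Real.exp (-(c * α))) / c := by
    have h1 : (∫ t in Ioc 0 α, Real.exp (-(t / α) - lam * min t α)) =
        ∫ t in Ioc 0 α, Real.exp (-c * t) := by
      apply MeasureTheory.setIntegral_congr_fun measurableSet_Ioc
      rintro t ⟨ht0, htα⟩
      dsimp only
      rw [min_eq_left htα]
      congr 1
      rw [hc]
      field_simp
      ring
    rw [h1, ← intervalIntegral.integral_of_le hα.le]
    rw [intervalIntegral.integral_comp_mul_left Real.exp (neg_ne_zero.mpr hc0.ne'),
      integral_exp]
    rw [mul_zero, Real.exp_zero, smul_eq_mul]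
    have h3 : -c * α = -(c * α) := by ring
    rw [h3]
    field_simp
    ring
  -- Step 4: compute piece 2
  have hJ2 : (∫ t in Ioi α, Real.exp (-(t / α) - lam * min t α)) =
      Real.exp (-(lam * α)) * (α * Real.exp (-1)) := by
    have h1 : (∫ t in Ioi α, Real.exp (-(t / α) - lam * min t α)) =
        ∫ t in Ioi α, Real.exp (-(lam * α)) * Real.exp (-(α⁻¹ * t)) := by
      apply MeasureTheory.setIntegral_congr_fun measurableSet_Ioi
      intro t (ht : α < t)
      dsimp only
      rw [min_eq_right ht.le, ← Real.exp_add]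
      congr 1
      field_simp
      ring
    rw [h1, MeasureTheory.integral_const_mul]
    congr 1
    have h2 := MeasureTheory.integral_comp_mul_left_Ioi (fun x => Real.exp (-x)) α
      (inv_pos.mpr hα)
    simp only [inv_inv] at h2
    rw [h2, inv_mul_cancel₀ hα.ne', smul_eq_mul, integral_exp_neg_Ioi]
  -- Step 5: put together
  have hcα : c * α = 1 + ρ := by
    rw [hc, hρ]
    field_simp
  have hαE : Real.exp (-(lam * α)) * (α * Real.exp (-1)) = α * E := by
    have h : Real.exp (-(lam * α)) * Real.exp (-1) = Real.exp (-(ρ + 1)) := by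
      rw [← Real.exp_add, hρ]; ring_nf
    calc Real.exp (-(lam * α)) * (α * Real.exp (-1))
        = α * (Real.exp (-(lam * α)) * Real.exp (-1)) := by ring
      _ = α * E := by rw [h, hE]
  have hEeq : Real.exp (-(1 + ρ)) = E := by rw [hE]; ring_nf
  have hlamJ : lam * (∫ t in Ioi (0:ℝ), Real.exp (-(t / α) - lam * min t α)) =
      ρ * (1 + ρ * E) / (1 + ρ) := by
    rw [hJsplit, hJ1, hJ2, hcα, hαE, hEeq, hc, hρ]
    have h1 : α⁻¹ + lam ≠ 0 := by positivity
    have h2 : (0:ℝ) < 1 + lam * α := by positivity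
    field_simp
    ring
  rw [hlamJ]
  have hE0 : 0 < E := by rw [hE]; exact Real.exp_pos _
  have hEinv : E = (Real.exp (ρ + 1))⁻¹ := by rw [hE, Real.exp_neg]
  have hexp0 : 0 < Real.exp (ρ + 1) := Real.exp_pos _
  have h1ρE : 0 < 1 + ρ * E := by positivity
  have h1ρ : (0:ℝ) < 1 + ρ := by linarith
  rw [hEinv]
  have h2 : Real.exp (ρ + 1) + ρ ≠ 0 := by positivity
  field_simp
  ring
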